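/- For n ≥ 1 and a specified subset R of {0,1,...,n} with |R| = k ≥ 1, the number of forests on vertex set {0,1,...,n} consisting of exactly k trees whose roots are exactly the elements of R equals k · (n+1)^{n-k}. -/

import Mathlib

open Function
namespace CF
attribute [local instance] Classical.propDecidable

variable {m : ℕ}

/-- Parent functions encoding rooted forests: fix `R` pointwise and every vertex's
iteration eventually reaches `R`. -/
def Valid (R : Finset (Fin m)) (f : Fin m → Fin m) : Prop :=
  (∀ r ∈ R, f r = r) ∧ ∀ v, ∃ j, f^[j] v ∈ R

noncomputable def rank (R : Finset (Fin m)) (f : Fin m → Fin m) (v : Fin m) : ℕ :=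
  sInf {j | f^[j] v ∈ R}

variable {R : Finset (Fin m)} {f : Fin m → Fin m} {v : Fin m}

lemma rank_spec (hv : ∃ j, f^[j] v ∈ R) : f^[rank R f v] v ∈ R := Nat.sInf_mem hv

lemma rank_min {i : ℕ} (h : i < rank R f v) : f^[i] v ∉ R := Nat.notMem_of_lt_sInf h

lemma rank_eq_zero_of_mem (hv : v ∈ R) : rank R f v = 0 :=
  Nat.sInf_eq_zero.2 (Or.inl (by simpa using hv))

lemma mem_of_rank_eq_zero (hv : ∃ j, f^[j] v ∈ R) (h : rank R f v = 0) : v ∈ R := by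
  have h2 := rank_spec hv
  rw [h] at h2; simpa using h2

lemma rank_pos (hv : ∃ j, f^[j] v ∈ R) (h : v ∉ R) : 0 < rank R f v :=
  Nat.pos_of_ne_zero fun h0 => h (mem_of_rank_eq_zero hv h0)

lemma exists_of_not_mem (hv : ∃ j, f^[j] v ∈ R) (h : v ∉ R) :
    ∃ j, f^[j] (f v) ∈ R := by
  refine ⟨rank R f v - 1, ?_⟩
  rw [← iterate_succ_apply]
  have : rank R f v - 1 + 1 = rank R f v := Nat.succ_pred_eq_of_pos (rank_pos hv h)
  rw [Nat.succ_eq_add_one, this]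
  exact rank_spec hv

lemma rank_succ (hv : ∃ j, f^[j] v ∈ R) (h : v ∉ R) :
    rank R f v = rank R f (f v) + 1 := by
  have h1 := exists_of_not_mem hv h
  refine le_antisymm (Nat.sInf_le ?_) ?_
  · show f^[rank R f (f v) + 1] v ∈ R
    rw [iterate_succ_apply]; exact rank_spec h1
  · have h2 : rank R f (f v) ≤ rank R f v - 1 := by
      refine Nat.sInf_le ?_
      show f^[rank R f v - 1] (f v) ∈ R
      rw [← iterate_succ_apply]
      have : rank R f v - 1 + 1 = rank R f v := Nat.succ_pred_eq_of_pos (rank_pos hv h)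
      rw [Nat.succ_eq_add_one, this]
      exact rank_spec hv
    have := rank_pos hv h
    omega

lemma mem_iterate (hfix : ∀ r ∈ R, f r = r) (hv : v ∈ R) (s : ℕ) : f^[s] v ∈ R := by
  induction s with
  | zero => simpa using hv
  | succ s ih => rw [iterate_succ_apply']; rwa [hfix _ ih]

lemma mem_iterate_of_rank_le (hfix : ∀ r ∈ R, f r = r) (hv : ∃ j, f^[j] v ∈ R)
    {j : ℕ} (hj : rank R f v ≤ j) : f^[j] v ∈ R := by
  obtain ⟨s, rfl⟩ := Nat.exists_eq_add_of_le hj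
  rw [Nat.add_comm, iterate_add_apply]
  exact mem_iterate hfix (rank_spec hv) s

lemma rank_iterate (hf : Valid R f) {i : ℕ} (hi : i ≤ rank R f v) :
    rank R f (f^[i] v) = rank R f v - i := by
  induction i with
  | zero => simp
  | succ i ih =>
    have hi' : i ≤ rank R f v := le_of_lt (Nat.lt_of_succ_le hi)
    have h1 : f^[i] v ∉ R := rank_min (by omega)
    have h2 : rank R f (f^[i] v) = rank R f (f (f^[i] v)) + 1 :=
      rank_succ (hf.2 _) h1
    rw [iterate_succ_apply']
    have := ih hi'
    omega

section IDX
variable {m : ℕ}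

/-- rank of `w` in the sorted order of `s`. -/
def idx (s : Finset (Fin m)) (w : Fin m) : ℕ := (s.filter (· < w)).card

lemma idx_lt_card {s : Finset (Fin m)} {w : Fin m} (hw : w ∈ s) : idx s w < s.card := by
  refine Finset.card_lt_card ?_
  refine ⟨Finset.filter_subset _ _, fun hsub => ?_⟩
  have := hsub hw
  simp at this

lemma idx_strictMono {s : Finset (Fin m)} {w w' : Fin m} (hw : w ∈ s) (h : w < w') :
    idx s w < idx s w' := by
  refine Finset.card_lt_card ⟨fun u hu => ?_, fun hsub => ?_⟩
  · simp only [Finset.mem_filter] at hu ⊢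
    exact ⟨hu.1, lt_trans hu.2 h⟩
  · have := hsub (by simp [hw, h] : w ∈ s.filter (· < w'))
    simp at this

lemma idx_injOn {s : Finset (Fin m)} {w w' : Fin m} (hw : w ∈ s) (hw' : w' ∈ s)
    (h : idx s w = idx s w') : w = w' := by
  rcases lt_trichotomy w w' with hlt | he | hlt
  · exact absurd h (Nat.ne_of_lt (idx_strictMono hw hlt))
  · exact he
  · exact absurd h.symm (Nat.ne_of_lt (idx_strictMono hw' hlt))

lemma idx_surj {s : Finset (Fin m)} {i : ℕ} (hi : i < s.card) :
    ∃ w ∈ s, idx s w = i := by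
  classical
  have himg : s.image (idx s) = Finset.range s.card := by
    refine Finset.eq_of_subset_of_card_le ?_ ?_
    · intro j hj
      simp only [Finset.mem_image] at hj
      obtain ⟨w, hw, rfl⟩ := hj
      simpa using idx_lt_card hw
    · rw [Finset.card_range, Finset.card_image_of_injOn]
      intro a ha b hb hab
      exact idx_injOn ha hb hab
  have : i ∈ s.image (idx s) := by rw [himg]; simpa using hi
  simpa using this

lemma min_bot_iff {s : Finset (Fin m)} : s.min = ⊤ ↔ s = ∅ := Finset.min_eq_top

lemma idx_of_min {s : Finset (Fin m)} {u : Fin m} (h : s.min = ↑u) :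
    u ∈ s ∧ idx s u = 0 := by
  have hu : u ∈ s := Finset.mem_of_min h
  refine ⟨hu, ?_⟩
  rw [idx, Finset.card_eq_zero]
  rw [Finset.filter_eq_empty_iff]
  intro x hx
  simp only [not_lt]
  exact Finset.min_le_of_eq hx h

lemma idx_of_next_bot {s : Finset (Fin m)} {w : Fin m} (hw : w ∈ s)
    (h : (s.filter (w < ·)).min = ⊤) : idx s w + 1 = s.card := by
  have hempty : s.filter (w < ·) = ∅ := min_bot_iff.1 h
  have hfe : s.filter (· < w) = s.erase w := by
    ext u
    simp only [Finset.mem_filter, Finset.mem_erase]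
    constructor
    · rintro ⟨hu, hlt⟩; exact ⟨ne_of_lt hlt, hu⟩
    · rintro ⟨hne, hu⟩
      refine ⟨hu, ?_⟩
      rcases lt_trichotomy u w with h1 | h1 | h1
      · exact h1
      · exact absurd h1 hne
      · exfalso
        have : u ∈ s.filter (w < ·) := by simp [hu, h1]
        rw [hempty] at this; simp at this
  rw [idx, hfe, Finset.card_erase_of_mem hw]
  have : 1 ≤ s.card := Finset.card_pos.2 ⟨w, hw⟩
  omega

lemma idx_of_next {s : Finset (Fin m)} {w u : Fin m} (hw : w ∈ s)
    (h : (s.filter (w < ·)).min = ↑u) : u ∈ s ∧ idx s u = idx s w + 1 := by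
  have hu : u ∈ s.filter (w < ·) := Finset.mem_of_min h
  simp only [Finset.mem_filter] at hu
  refine ⟨hu.1, ?_⟩
  have hfe : s.filter (· < u) = insert w (s.filter (· < w)) := by
    ext x
    simp only [Finset.mem_filter, Finset.mem_insert]
    constructor
    · rintro ⟨hx, hlt⟩
      rcases lt_trichotomy x w with h1 | h1 | h1
      · exact Or.inr ⟨hx, h1⟩
      · exact Or.inl h1
      · exfalso
        have hxf : x ∈ s.filter (w < ·) := by simp [hx, h1]
        have := Finset.min_le_of_eq hxf h
        exact absurd hlt (not_lt.2 (by exact_mod_cast this))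
    · rintro (rfl | ⟨hx, hlt⟩)
      · exact ⟨hw, hu.2⟩
      · exact ⟨hx, lt_trans hlt hu.2⟩
  rw [idx, hfe, Finset.card_insert_of_notMem (by simp)]
  rfl

end IDX

section CYC
variable {m : ℕ}

/-- The set of cyclic points of `g` outside `R`. -/
noncomputable def cycSet (R : Finset (Fin m)) (g : Fin m → Fin m) : Finset (Fin m) :=
  Finset.univ.filter (fun x => x ∉ R ∧ ∃ j, g^[j + 1] x = x)

lemma mem_cycSet {R : Finset (Fin m)} {g : Fin m → Fin m} {x : Fin m} :
    x ∈ cycSet R g ↔ x ∉ R ∧ ∃ j, g^[j + 1] x = x := by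
  simp only [cycSet, Finset.mem_filter, Finset.mem_univ, true_and]

lemma cycSet_disj_R {R : Finset (Fin m)} {g : Fin m → Fin m} {x : Fin m}
    (hx : x ∈ cycSet R g) : x ∉ R := (mem_cycSet.1 hx).1

lemma cycSet_maps {R : Finset (Fin m)} {g : Fin m → Fin m}
    (hg : ∀ r ∈ R, g r = r) {x : Fin m} (hx : x ∈ cycSet R g) : g x ∈ cycSet R g := by
  obtain ⟨hxR, j, hj⟩ := mem_cycSet.1 hx
  refine mem_cycSet.2 ⟨?_, j, ?_⟩
  · intro hgx
    apply hxR
    have : g^[j] (g x) ∈ R := mem_iterate hg hgx j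
    rw [← iterate_succ_apply] at this
    rwa [hj] at this
  · rw [← iterate_succ_apply, iterate_succ_apply', hj]

lemma cycSet_injOn {R : Finset (Fin m)} {g : Fin m → Fin m}
    {x y : Fin m} (hx : x ∈ cycSet R g) (hy : y ∈ cycSet R g) (h : g x = g y) : x = y := by
  obtain ⟨-, j, hj⟩ := mem_cycSet.1 hx
  obtain ⟨-, l, hl⟩ := mem_cycSet.1 hy
  set A := (j + 1) * (l + 1) with hA
  have hA1 : 1 ≤ A := Nat.mul_pos (by omega) (by omega)
  have hx' : g^[A] x = x := by
    rw [hA, iterate_mul]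
    exact Function.iterate_fixed hj _
  have hy' : g^[A] y = y := by
    rw [hA, Nat.mul_comm, iterate_mul]
    exact Function.iterate_fixed hl _
  have hxa : g^[A] x = g^[A - 1] (g x) := by
    conv_lhs => rw [show A = A - 1 + 1 by omega]
    rw [iterate_succ_apply]
  have hya : g^[A] y = g^[A - 1] (g y) := by
    conv_lhs => rw [show A = A - 1 + 1 by omega]
    rw [iterate_succ_apply]
  calc x = g^[A] x := hx'.symm
    _ = g^[A - 1] (g x) := hxa
    _ = g^[A - 1] (g y) := by rw [h]
    _ = g^[A] y := hya.symm
    _ = y := hy'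

lemma cycSet_image {R : Finset (Fin m)} {g : Fin m → Fin m}
    (hg : ∀ r ∈ R, g r = r) : (cycSet R g).image g = cycSet R g := by
  refine Finset.eq_of_subset_of_card_le ?_ ?_
  · intro y hy
    simp only [Finset.mem_image] at hy
    obtain ⟨x, hx, rfl⟩ := hy
    exact cycSet_maps hg hx
  · rw [Finset.card_image_of_injOn]
    intro a ha b hb hab
    exact cycSet_injOn ha hb hab

/-- pigeonhole: some iterate of any point is cyclic. -/
lemma exists_iterate_cyclic (g : Fin m → Fin m) (y : Fin m) :
    ∃ a, ∃ j, g^[j + 1] (g^[a] y) = g^[a] y := by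
  have hm : 0 < m := y.pos
  have hcard : Fintype.card (Fin m) < Fintype.card (Fin (m + 1)) := by simp
  obtain ⟨a, b, hne, heq⟩ :=
    Fintype.exists_ne_map_eq_of_card_lt (fun i : Fin (m + 1) => g^[(i : ℕ)] y) hcard
  rcases Ne.lt_or_gt hne with hab | hab
  · refine ⟨(a : ℕ), (b : ℕ) - (a : ℕ) - 1, ?_⟩
    have h1 : ((b : ℕ) - (a : ℕ) - 1) + 1 + (a : ℕ) = (b : ℕ) := by
      have : (a : ℕ) < b := hab
      omega
    rw [← Function.iterate_add_apply, h1, heq]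
  · refine ⟨(b : ℕ), (a : ℕ) - (b : ℕ) - 1, ?_⟩
    have h1 : ((a : ℕ) - (b : ℕ) - 1) + 1 + (b : ℕ) = (a : ℕ) := by
      have : (b : ℕ) < a := hab
      omega
    rw [← Function.iterate_add_apply, h1, heq.symm]

/-- on a finite set closed under `g` with `g` injective there, every point is cyclic. -/
lemma cyclic_of_closed {s : Finset (Fin m)} {g : Fin m → Fin m}
    (hmaps : ∀ x ∈ s, g x ∈ s) (hinj : ∀ x ∈ s, ∀ y ∈ s, g x = g y → x = y)
    {x : Fin m} (hx : x ∈ s) : ∃ j, g^[j + 1] x = x := by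
  have hiter : ∀ i, g^[i] x ∈ s := by
    intro i
    induction i with
    | zero => simpa using hx
    | succ i ih => rw [iterate_succ_apply']; exact hmaps _ ih
  obtain ⟨a, j, hj⟩ := exists_iterate_cyclic g x
  -- peel the injectivity a times
  have key : ∀ a, g^[j + 1] (g^[a] x) = g^[a] x → g^[j + 1] x = x := by
    intro a
    induction a with
    | zero => simp
    | succ a ih =>
      intro h
      apply ih
      have hmem1 : g^[j + 1] (g^[a] x) ∈ s := by
        rw [← Function.iterate_add_apply]; exact hiter _
      apply hinj _ hmem1 _ (hiter a)
      have h1 : g (g^[j + 1] (g^[a] x)) = g^[(j + 1) + (a + 1)] x :=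
        calc g (g^[j + 1] (g^[a] x)) = g (g^[j + 1 + a] x) := by
              rw [← Function.iterate_add_apply]
          _ = g^[(j + 1 + a) + 1] x := (iterate_succ_apply' g _ x).symm
          _ = g^[(j + 1) + (a + 1)] x := by congr 1
      have h2 : g^[j + 1] (g^[a + 1] x) = g^[(j + 1) + (a + 1)] x :=
        (Function.iterate_add_apply _ _ _ _).symm
      rw [h1, ← h2, h, iterate_succ_apply']
  exact ⟨j, key a hj⟩

end CYC

section MAPS
variable {m : ℕ}

noncomputable def chainSet (R : Finset (Fin m)) (f : Fin m → Fin m) (v : Fin m) :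
    Finset (Fin m) :=
  (Finset.range (rank R f v)).image (fun i => f^[i] v)

noncomputable def fwdG (R : Finset (Fin m)) (f : Fin m → Fin m) (v : Fin m) :
    Fin m → Fin m :=
  fun x => if x ∈ chainSet R f v then f^[idx (chainSet R f v) x] v else f x

noncomputable def bwdF (R : Finset (Fin m)) (g : Fin m → Fin m) (r : Fin m) :
    Fin m → Fin m :=
  fun y =>
    if hy : ∃ w, w ∈ cycSet R g ∧ g w = y then
      WithTop.recTopCoe r g (((cycSet R g).filter (hy.choose < ·)).min)
    else if y ∈ R then y else g y

noncomputable def bwdV (R : Finset (Fin m)) (g : Fin m → Fin m) (r : Fin m) : Fin m :=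
  WithTop.recTopCoe r g ((cycSet R g).min)

variable {R : Finset (Fin m)} {f g : Fin m → Fin m} {v r x y : Fin m}

lemma mem_chainSet : x ∈ chainSet R f v ↔ ∃ i < rank R f v, f^[i] v = x := by
  simp [chainSet]

lemma chain_inj (hf : Valid R f) {i j : ℕ} (hi : i ≤ rank R f v) (hj : j ≤ rank R f v)
    (h : f^[i] v = f^[j] v) : i = j := by
  have h1 := rank_iterate (v := v) hf hi
  have h2 := rank_iterate (v := v) hf hj
  rw [h] at h1
  omega

lemma card_chainSet (hf : Valid R f) : (chainSet R f v).card = rank R f v := by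
  rw [chainSet, Finset.card_image_of_injOn, Finset.card_range]
  intro a ha b hb hab
  simp only [Finset.coe_range, Set.mem_Iio] at ha hb
  exact chain_inj hf (le_of_lt ha) (le_of_lt hb) hab

lemma chainSet_not_mem_R (hx : x ∈ chainSet R f v) : x ∉ R := by
  obtain ⟨i, hi, rfl⟩ := mem_chainSet.1 hx
  exact rank_min hi

lemma fwdG_mem (hx : x ∈ chainSet R f v) :
    fwdG R f v x = f^[idx (chainSet R f v) x] v := if_pos hx

lemma fwdG_not_mem (hx : x ∉ chainSet R f v) : fwdG R f v x = f x := if_neg hx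

lemma fwdG_maps (hf : Valid R f) (hx : x ∈ chainSet R f v) :
    fwdG R f v x ∈ chainSet R f v := by
  rw [fwdG_mem hx]
  exact mem_chainSet.2 ⟨_, by rw [← card_chainSet hf]; exact idx_lt_card hx, rfl⟩

lemma fwdG_injOn (hf : Valid R f) (hx : x ∈ chainSet R f v) (hy : y ∈ chainSet R f v)
    (h : fwdG R f v x = fwdG R f v y) : x = y := by
  rw [fwdG_mem hx, fwdG_mem hy] at h
  have hc := card_chainSet (v := v) hf
  have h1 : idx (chainSet R f v) x = idx (chainSet R f v) y :=
    chain_inj hf (by rw [← hc]; exact le_of_lt (idx_lt_card hx))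
      (by rw [← hc]; exact le_of_lt (idx_lt_card hy)) h
  exact idx_injOn hx hy h1

lemma fwdG_fixes (hf : Valid R f) (hr : x ∈ R) : fwdG R f v x = x := by
  rw [fwdG_not_mem (fun hc => chainSet_not_mem_R hc hr)]
  exact hf.1 _ hr

/-- The cyclic set of the forward map is exactly the chain. -/
lemma cycSet_fwdG (hf : Valid R f) : cycSet R (fwdG R f v) = chainSet R f v := by
  ext x
  constructor
  · intro hx
    obtain ⟨hxR, j, hj⟩ := mem_cycSet.1 hx
    by_contra hxc
    -- iterates of fwdG stay off the chain and agree with f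
    have hnever : ∀ s, (fwdG R f v)^[s] x ∉ chainSet R f v := by
      intro s hs
      rcases Nat.eq_zero_or_pos s with rfl | hs0
      · simp at hs; exact hxc hs
      · have hclose : ∀ i, (fwdG R f v)^[i] ((fwdG R f v)^[s] x) ∈ chainSet R f v := by
          intro i
          induction i with
          | zero => simpa using hs
          | succ i ih => rw [iterate_succ_apply']; exact fwdG_maps hf ih
        have hA : (fwdG R f v)^[(j + 1) * s] x = x := by
          rw [iterate_mul]
          exact Function.iterate_fixed hj _
        have : x ∈ chainSet R f v := by
          have h2 := hclose ((j + 1) * s - s)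
          rw [← Function.iterate_add_apply] at h2
          rw [show (j + 1) * s - s + s = (j + 1) * s by
            have : s ≤ (j + 1) * s := Nat.le_mul_of_pos_left s (by omega)
            omega] at h2
          rwa [hA] at h2
        exact hxc this
    have hagree : ∀ s, (fwdG R f v)^[s] x = f^[s] x := by
      intro s
      induction s with
      | zero => rfl
      | succ s ih =>
        rw [iterate_succ_apply', iterate_succ_apply', ih, ← ih,
          fwdG_not_mem (hnever s), ih]
    have hfj : f^[j + 1] x = x := by rw [← hagree]; exact hj
    -- but iterating f from x eventually lands in R and stays
    have hxR2 : x ∈ R := by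
      have hv2 := hf.2 x
      have h1 : f^[(j + 1) * rank R f x] x = x := by
        rw [iterate_mul]; exact Function.iterate_fixed hfj _
      have h2 : f^[(j + 1) * rank R f x] x ∈ R := by
        apply mem_iterate_of_rank_le hf.1 hv2
        exact Nat.le_mul_of_pos_left _ (by omega)
      rwa [h1] at h2
    exact hxR hxR2
  · intro hx
    exact mem_cycSet.2 ⟨chainSet_not_mem_R hx,
      cyclic_of_closed (fun a ha => fwdG_maps hf ha)
        (fun a ha b hb => fwdG_injOn hf ha hb) hx⟩

end MAPS

section BWD
variable {m : ℕ} {R : Finset (Fin m)} {g : Fin m → Fin m} {r v x y w : Fin m}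

lemma bwd_no_preimage (hg : ∀ r ∈ R, g r = r) (hy : y ∉ cycSet R g) :
    ¬ ∃ w, w ∈ cycSet R g ∧ g w = y := by
  rintro ⟨w, hw, rfl⟩
  exact hy (cycSet_maps hg hw)

lemma bwd_not_cyc (hg : ∀ r ∈ R, g r = r) (hy : y ∉ cycSet R g) (hyR : y ∉ R) :
    bwdF R g r y = g y := by
  rw [bwdF, dif_neg (bwd_no_preimage hg hy), if_neg hyR]

lemma bwd_fixes (hg : ∀ r ∈ R, g r = r) (hyR : y ∈ R) : bwdF R g r y = y := by
  have hy : y ∉ cycSet R g := fun hc => cycSet_disj_R hc hyR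
  rw [bwdF, dif_neg (bwd_no_preimage hg hy), if_pos hyR]

lemma bwd_on_cyc (hw : w ∈ cycSet R g) :
    bwdF R g r (g w) = WithTop.recTopCoe r g (((cycSet R g).filter (w < ·)).min) := by
  have hy : ∃ w', w' ∈ cycSet R g ∧ g w' = g w := ⟨w, hw, rfl⟩
  rw [bwdF, dif_pos hy]
  have hcw : hy.choose = w :=
    cycSet_injOn hy.choose_spec.1 hw hy.choose_spec.2
  rw [hcw]

/-- every element of the cyclic set reaches `R` under the backward map. -/
lemma bwd_cyc_reach (hg : ∀ r ∈ R, g r = r) (hr : r ∈ R) :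
    ∀ d w, w ∈ cycSet R g → (cycSet R g).card - idx (cycSet R g) w ≤ d + 1 →
      ∃ a, (bwdF R g r)^[a] (g w) ∈ R := by
  intro d
  induction d with
  | zero =>
    intro w hw hd
    have hlt := idx_lt_card hw
    rcases hmin : ((cycSet R g).filter (w < ·)).min with _ | u
    · exact ⟨1, by rw [iterate_one, bwd_on_cyc hw, hmin]; exact hr⟩
    · exfalso
      obtain ⟨hu, hiu⟩ := idx_of_next hw hmin
      have h3 := idx_lt_card hu
      omega
  | succ d ih =>
    intro w hw hd
    rcases hmin : ((cycSet R g).filter (w < ·)).min with _ | u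
    · exact ⟨1, by rw [iterate_one, bwd_on_cyc hw, hmin]; exact hr⟩
    · obtain ⟨hu, hiu⟩ := idx_of_next hw hmin
      obtain ⟨a, ha⟩ := ih u hu (by omega)
      refine ⟨a + 1, ?_⟩
      rw [iterate_succ_apply, bwd_on_cyc hw, hmin]
      exact ha

lemma bwd_valid (hg : ∀ r ∈ R, g r = r) (hr : r ∈ R) : Valid R (bwdF R g r) := by
  constructor
  · intro z hz; exact bwd_fixes hg hz
  · -- every vertex reaches R
    have hcyc : ∀ y ∈ cycSet R g, ∃ a, (bwdF R g r)^[a] y ∈ R := by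
      intro y hy
      rw [← cycSet_image hg] at hy
      obtain ⟨w, hw, rfl⟩ := Finset.mem_image.1 hy
      exact bwd_cyc_reach hg hr ((cycSet R g).card) w hw (by omega)
    have key : ∀ a y, (g^[a] y ∈ cycSet R g ∨ g^[a] y ∈ R) →
        ∃ b, (bwdF R g r)^[b] y ∈ R := by
      intro a
      induction a with
      | zero =>
        intro y hy
        simp only [iterate_zero, id] at hy
        rcases hy with hy | hy
        · exact hcyc y hy
        · exact ⟨0, hy⟩
      | succ a ih =>
        intro y hy
        by_cases hyc : y ∈ cycSet R g
        · exact hcyc y hyc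
        by_cases hyR : y ∈ R
        · exact ⟨0, hyR⟩
        rw [iterate_succ_apply] at hy
        obtain ⟨b, hb⟩ := ih (g y) hy
        refine ⟨b + 1, ?_⟩
        rw [iterate_succ_apply, bwd_not_cyc hg hyc hyR]
        exact hb
    intro y
    obtain ⟨a, j, hj⟩ := exists_iterate_cyclic g y
    by_cases hz : g^[a] y ∈ R
    · exact key a y (Or.inr hz)
    · exact key a y (Or.inl (mem_cycSet.2 ⟨hz, j, hj⟩))

end BWD

section RT
variable {m : ℕ} {R : Finset (Fin m)} {f g : Fin m → Fin m} {v r : Fin m}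

/-- Round trip 1, vertex component. -/
lemma rt1_v (hf : Valid R f) (v : Fin m) :
    bwdV R (fwdG R f v) (f^[rank R f v] v) = v := by
  have hCC := cycSet_fwdG (v := v) hf
  rw [bwdV, hCC]
  rcases hmin : (chainSet R f v).min with _ | u
  · have hempty : chainSet R f v = ∅ := min_bot_iff.1 hmin
    have ht : rank R f v = 0 := by
      rw [← card_chainSet (v := v) hf, hempty]; rfl
    rw [ht]; rfl
  · obtain ⟨hu, hiu⟩ := idx_of_min hmin
    show fwdG R f v u = v
    rw [fwdG_mem hu, hiu]
    rfl

/-- Round trip 1, function component. -/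
lemma rt1_f (hf : Valid R f) (v : Fin m) :
    bwdF R (fwdG R f v) (f^[rank R f v] v) = f := by
  have hCC := cycSet_fwdG (v := v) hf
  have hgfix : ∀ z ∈ R, fwdG R f v z = z := fun z hz => fwdG_fixes hf hz
  funext y
  by_cases hy : y ∈ chainSet R f v
  · -- y = g w for some w in the chain
    have hyim : y ∈ (cycSet R (fwdG R f v)).image (fwdG R f v) := by
      rw [cycSet_image hgfix, hCC]; exact hy
    obtain ⟨w, hw, rfl⟩ := Finset.mem_image.1 hyim
    have hwC : w ∈ chainSet R f v := by rwa [hCC] at hw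
    rw [bwd_on_cyc hw, hCC]
    have hidx := idx_lt_card hwC
    have hcard := card_chainSet (v := v) hf
    rcases hmin : ((chainSet R f v).filter (w < ·)).min with _ | u
    · have h1 := idx_of_next_bot hwC hmin
      show f^[rank R f v] v = f (fwdG R f v w)
      rw [fwdG_mem hwC]
      have h2 : rank R f v = idx (chainSet R f v) w + 1 := by omega
      rw [h2]
      exact iterate_succ_apply' f _ v
    · obtain ⟨hu, hiu⟩ := idx_of_next hwC hmin
      show fwdG R f v u = f (fwdG R f v w)
      rw [fwdG_mem hwC, fwdG_mem hu, hiu]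
      exact iterate_succ_apply' f _ v
  · by_cases hyR : y ∈ R
    · rw [bwd_fixes hgfix hyR, hf.1 _ hyR]
    · rw [bwd_not_cyc hgfix (by rwa [hCC]) hyR, fwdG_not_mem hy]

/-- Round trip 2 chain description. -/
lemma rt2_chain (hg : ∀ z ∈ R, g z = z) (hr : r ∈ R) :
    (∀ i < (cycSet R g).card, ∃ w ∈ cycSet R g, idx (cycSet R g) w = i ∧
      (bwdF R g r)^[i] (bwdV R g r) = g w) ∧
    (bwdF R g r)^[(cycSet R g).card] (bwdV R g r) = r := by
  set C := cycSet R g with hC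
  set f := bwdF R g r with hfdef
  set v := bwdV R g r with hvdef
  have main : ∀ i < C.card, ∃ w ∈ C, idx C w = i ∧ f^[i] v = g w := by
    intro i
    induction i with
    | zero =>
      intro h0
      have hne : C.Nonempty := Finset.card_pos.1 h0
      rcases hmin : C.min with _ | u
      · exact absurd (min_bot_iff.1 hmin) (Finset.nonempty_iff_ne_empty.1 hne)
      · obtain ⟨hu, hiu⟩ := idx_of_min hmin
        exact ⟨u, hu, hiu, by rw [hvdef, bwdV, ← hC, hmin]; rfl⟩
    | succ i ih =>
      intro hi
      obtain ⟨w, hw, hiw, hfw⟩ := ih (by omega)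
      rw [iterate_succ_apply', hfw]
      rcases hmin : (C.filter (w < ·)).min with _ | u
      · have h1 := idx_of_next_bot hw hmin
        omega
      · obtain ⟨hu, hiu⟩ := idx_of_next hw hmin
        exact ⟨u, hu, by omega, by rw [hfdef, bwd_on_cyc hw, ← hC, hmin]; rfl⟩
  refine ⟨main, ?_⟩
  rcases Nat.eq_zero_or_pos C.card with h0 | h0
  · have hempty : C = ∅ := Finset.card_eq_zero.1 h0
    rw [h0, iterate_zero, id, hvdef, bwdV, ← hC, hempty]
    rfl
  · obtain ⟨w, hw, hiw, hfw⟩ := main (C.card - 1) (by omega)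
    have : C.card = (C.card - 1) + 1 := by omega
    rw [this, iterate_succ_apply', hfw]
    rcases hmin : (C.filter (w < ·)).min with _ | u
    · rw [hfdef, bwd_on_cyc hw, ← hC, hmin]; rfl
    · obtain ⟨hu, hiu⟩ := idx_of_next hw hmin
      have := idx_lt_card hu
      omega

end RT

section EQUIV
variable {m : ℕ} {R : Finset (Fin m)} {f g : Fin m → Fin m} {v r : Fin m}

lemma rt2 (hg : ∀ z ∈ R, g z = z) (hr : r ∈ R) :
    rank R (bwdF R g r) (bwdV R g r) = (cycSet R g).card ∧
    (bwdF R g r)^[(cycSet R g).card] (bwdV R g r) = r ∧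
    fwdG R (bwdF R g r) (bwdV R g r) = g := by
  obtain ⟨main, hlast⟩ := rt2_chain (R := R) (g := g) (r := r) hg hr
  set C := cycSet R g with hC
  set f := bwdF R g r with hfdef
  set v := bwdV R g r with hvdef
  have hfv : Valid R f := bwd_valid hg hr
  have hrank : rank R f v = C.card := by
    refine le_antisymm (Nat.sInf_le (by show f^[C.card] v ∈ R; rw [hlast]; exact hr)) ?_
    by_contra hlt
    push_neg at hlt
    have h1 := rank_spec (hfv.2 v)
    obtain ⟨w, hw, -, hfw⟩ := main _ hlt
    rw [hfw] at h1
    exact cycSet_disj_R (cycSet_maps hg hw) h1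
  have hchain : chainSet R f v = C := by
    refine Finset.eq_of_subset_of_card_le ?_ ?_
    · intro x hx
      obtain ⟨i, hi, rfl⟩ := mem_chainSet.1 hx
      rw [hrank] at hi
      obtain ⟨w, hw, -, hfw⟩ := main _ hi
      rw [hfw]
      exact cycSet_maps hg hw
    · rw [card_chainSet hfv, hrank]
  refine ⟨hrank, hlast, ?_⟩
  funext y
  by_cases hy : y ∈ chainSet R f v
  · rw [fwdG_mem hy]
    have hyC : y ∈ C := by rwa [hchain] at hy
    have hidx : idx (chainSet R f v) y < C.card := by
      have := idx_lt_card hy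
      rwa [card_chainSet hfv, hrank] at this
    obtain ⟨w, hw, hiw, hfw⟩ := main _ hidx
    have hwy : w = y := by
      apply idx_injOn hw hyC
      rw [hiw, hchain]
    rw [hfw, hwy]
  · have hyC : y ∉ C := by rwa [hchain] at hy
    rw [fwdG_not_mem hy]
    by_cases hyR : y ∈ R
    · rw [hfdef, bwd_fixes hg hyR, hg _ hyR]
    · rw [hfdef, bwd_not_cyc hg hyC hyR]

variable (R)

noncomputable def equivB :
    (Fin m × {f : Fin m → Fin m // Valid R f}) ≃
      (↥R × {g : Fin m → Fin m // ∀ z ∈ R, g z = z}) where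
  toFun p := (⟨p.2.1^[rank R p.2.1 p.1] p.1, rank_spec (p.2.2.2 p.1)⟩,
              ⟨fwdG R p.2.1 p.1, fun z hz => fwdG_fixes p.2.2 hz⟩)
  invFun q := (bwdV R q.2.1 q.1.1, ⟨bwdF R q.2.1 q.1.1, bwd_valid q.2.2 q.1.2⟩)
  left_inv p := by
    obtain ⟨v, f, hf⟩ := p
    simp only [Prod.mk.injEq]
    exact ⟨rt1_v hf v, Subtype.ext (rt1_f hf v)⟩
  right_inv q := by
    obtain ⟨⟨r, hr⟩, g, hg⟩ := q
    have h := rt2 hg hr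
    simp only [Prod.mk.injEq, Subtype.mk.injEq]
    refine ⟨?_, h.2.2⟩
    rw [h.1]
    exact h.2.1

noncomputable def equivFix :
    {g : Fin m → Fin m // ∀ z ∈ R, g z = z} ≃ ({x : Fin m // x ∉ R} → Fin m) where
  toFun g x := g.1 x.1
  invFun h := ⟨fun y => if hy : y ∈ R then y else h ⟨y, hy⟩, fun z hz => dif_pos hz⟩
  left_inv g := by
    apply Subtype.ext
    funext y
    by_cases hy : y ∈ R
    · simp only [dif_pos hy]
      exact (g.2 _ hy).symm
    · simp only [dif_neg hy]
  right_inv h := by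
    funext x
    simp only [dif_neg x.2]

theorem partB : Nat.card {f : Fin m → Fin m // Valid R f} * m
    = R.card * m ^ (m - R.card) := by
  have h := Nat.card_congr (equivB R)
  rw [Nat.card_prod, Nat.card_prod, Nat.card_congr (equivFix R), Nat.card_fun] at h
  have h1 : Nat.card (Fin m) = m := by simp
  have h2 : Nat.card ↥R = R.card := by
    rw [Nat.card_eq_fintype_card, Fintype.card_coe]
  have h3 : Nat.card {x : Fin m // x ∉ R} = m - R.card := by
    rw [Nat.card_eq_fintype_card]
    have := Fintype.card_subtype_compl (fun x : Fin m => x ∈ R)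
    simp only [Fintype.card_fin, Fintype.card_subtype] at this ⊢
    convert this using 2
    simp [Finset.filter_mem_eq_inter]
  rw [h1, h2, h3] at h
  rw [mul_comm]
  exact h

end EQUIV

section GRAPH
open SimpleGraph
variable {m : ℕ}

def graphOf (R : Finset (Fin m)) (f : Fin m → Fin m) : SimpleGraph (Fin m) :=
  SimpleGraph.fromRel (fun a b => a ∉ R ∧ f a = b)

variable {R : Finset (Fin m)} {f : Fin m → Fin m} {v w : Fin m}

lemma graphOf_adj : (graphOf R f).Adj v w ↔
    v ≠ w ∧ ((v ∉ R ∧ f v = w) ∨ (w ∉ R ∧ f w = v)) := by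
  simp [graphOf, SimpleGraph.fromRel_adj]

lemma f_ne_self (hf : Valid R f) (h : v ∉ R) : f v ≠ v := by
  intro he
  have h2 := rank_succ (hf.2 v) h
  rw [he] at h2
  omega

lemma adj_parent (hf : Valid R f) (h : v ∉ R) : (graphOf R f).Adj v (f v) :=
  graphOf_adj.2 ⟨Ne.symm (f_ne_self hf h), Or.inl ⟨h, rfl⟩⟩

noncomputable def rootf (R : Finset (Fin m)) (f : Fin m → Fin m) (v : Fin m) : Fin m :=
  f^[rank R f v] v

lemma rootf_mem (hf : Valid R f) : rootf R f v ∈ R := rank_spec (hf.2 v)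

lemma rootf_of_mem (h : v ∈ R) : rootf R f v = v := by
  rw [rootf, rank_eq_zero_of_mem h]; rfl

lemma rootf_step (hf : Valid R f) (h : v ∉ R) : rootf R f (f v) = rootf R f v := by
  rw [rootf, rootf, rank_succ (hf.2 v) h, iterate_succ_apply]

lemma reach_rootf (hf : Valid R f) (v : Fin m) :
    (graphOf R f).Reachable v (rootf R f v) := by
  have key : ∀ n v, rank R f v = n → (graphOf R f).Reachable v (rootf R f v) := by
    intro n
    induction n with
    | zero =>
      intro v hv
      have : v ∈ R := mem_of_rank_eq_zero (hf.2 v) hv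
      rw [rootf_of_mem this]
    | succ n ih =>
      intro v hv
      have hvR : v ∉ R := by
        intro hc
        rw [rank_eq_zero_of_mem hc] at hv
        omega
      have h1 : rank R f (f v) = n := by
        have := rank_succ (hf.2 v) hvR
        omega
      have h2 := ih (f v) h1
      rw [rootf_step hf hvR] at h2
      exact (adj_parent hf hvR).reachable.trans h2
  exact key _ v rfl

lemma rootf_adj_eq (hf : Valid R f) (hadj : (graphOf R f).Adj v w) :
    rootf R f v = rootf R f w := by
  obtain ⟨-, ⟨hv, rfl⟩ | ⟨hw, rfl⟩⟩ := graphOf_adj.1 hadj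
  · exact (rootf_step hf hv).symm
  · exact rootf_step hf hw

lemma rootf_reach_eq (hf : Valid R f) (h : (graphOf R f).Reachable v w) :
    rootf R f v = rootf R f w := by
  obtain ⟨p⟩ := h
  induction p with
  | nil => rfl
  | cons hadj p ih => exact (rootf_adj_eq hf hadj).trans ih

lemma graphOf_acyclic (hf : Valid R f) : (graphOf R f).IsAcyclic := by
  intro u c hc
  -- pick a vertex of maximal rank on the cycle
  obtain ⟨x, hxs, hmax⟩ := Finset.exists_max_image c.support.toFinset (rank R f)
    ⟨u, by simp [c.start_mem_support]⟩
  rw [List.mem_toFinset] at hxs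
  have hmax' : ∀ a ∈ c.support, rank R f a ≤ rank R f x := by
    intro a ha
    exact hmax a (List.mem_toFinset.2 ha)
  have hmem : ∀ a, a ∈ (c.rotate x hxs).support → a ∈ c.support := by
    intro a ha
    rw [SimpleGraph.Walk.support_eq_cons] at ha
    rcases List.mem_cons.1 ha with rfl | ha
    · exact hxs
    · have hrot := SimpleGraph.Walk.support_rotate c x hxs
      rw [hrot.mem_iff] at ha
      rw [SimpleGraph.Walk.support_eq_cons c]
      exact List.mem_cons_of_mem _ ha
  have hcyc := hc.rotate hxs
  generalize hgen : c.rotate x hxs = c' at hcyc hmem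
  clear hgen hc
  cases c' with
  | nil =>
    rw [SimpleGraph.Walk.isCycle_def] at hcyc
    exact hcyc.2.1 rfl
  | cons hxa p =>
    rename_i a
    rw [SimpleGraph.Walk.cons_isCycle_iff] at hcyc
    obtain ⟨hpath, hedge⟩ := hcyc
    have hane : x ≠ a := hxa.ne
    -- decompose the reverse of p to find the last vertex b before x
    have hcases : ∃ b, ∃ hxb : (graphOf R f).Adj x b, ∃ q : (graphOf R f).Walk b a,
        p.reverse = SimpleGraph.Walk.cons hxb q := by
      generalize hrev : p.reverse = pr
      cases pr with
      | nil => exact absurd rfl (Ne.symm hane)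
      | cons hxb q => exact ⟨_, hxb, q, rfl⟩
    obtain ⟨b, hxb, q, hrev⟩ := hcases
    -- b ≠ a, else the edge s(x,a) would lie on p
    have hba : b ≠ a := by
      rintro rfl
      apply hedge
      have h1 : s(x, b) ∈ p.reverse.edges := by
        rw [hrev, SimpleGraph.Walk.edges_cons]
        exact List.mem_cons_self
      rwa [SimpleGraph.Walk.edges_reverse, List.mem_reverse] at h1
    -- memberships in the support of the original cycle
    have hasup : a ∈ c.support := hmem a (by
      rw [SimpleGraph.Walk.support_cons]
      exact List.mem_cons_of_mem _ p.start_mem_support)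
    have hbsup : b ∈ c.support := hmem b (by
      rw [SimpleGraph.Walk.support_cons]
      apply List.mem_cons_of_mem
      have : b ∈ p.reverse.support := by
        rw [hrev, SimpleGraph.Walk.support_cons]
        exact List.mem_cons_of_mem _ q.start_mem_support
      rwa [SimpleGraph.Walk.support_reverse, List.mem_reverse] at this)
    -- x has maximal rank, so both incident cycle edges point away from the roots
    have hfa : f x = a := by
      obtain ⟨-, ⟨hxR, hfx⟩ | ⟨haR, hfa⟩⟩ := graphOf_adj.1 hxa
      · exact hfx
      · exfalso
        have h2 := rank_succ (hf.2 a) haR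
        rw [hfa] at h2
        have := hmax' a hasup
        omega
    have hfb : f x = b := by
      obtain ⟨-, ⟨hxR, hfx⟩ | ⟨hbR, hfb⟩⟩ := graphOf_adj.1 hxb
      · exact hfx
      · exfalso
        have h2 := rank_succ (hf.2 b) hbR
        rw [hfb] at h2
        have := hmax' b hbsup
        omega
    exact hba (hfb ▸ hfa)

end GRAPH

section GRAPH2
open SimpleGraph
variable {m : ℕ} {R : Finset (Fin m)} {f g : Fin m → Fin m} {v w : Fin m}

lemma graphOf_P (hf : Valid R f) (c : (graphOf R f).ConnectedComponent) :
    ∃! r, r ∈ R ∧ (graphOf R f).connectedComponentMk r = c := by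
  induction c using SimpleGraph.ConnectedComponent.ind with
  | _ v =>
    refine ⟨rootf R f v, ⟨rootf_mem hf, ?_⟩, ?_⟩
    · rw [SimpleGraph.ConnectedComponent.eq]
      exact (reach_rootf hf v).symm
    · rintro r' ⟨hr', hc⟩
      rw [SimpleGraph.ConnectedComponent.eq] at hc
      have h2 := rootf_reach_eq hf hc
      rwa [rootf_of_mem hr'] at h2

lemma graphOf_inj (hf : Valid R f) (hg : Valid R g) (h : graphOf R f = graphOf R g) :
    f = g := by
  funext v
  have key : ∀ n v, rank R f v = n → f v = g v := by
    intro n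
    induction n using Nat.strong_induction_on with
    | _ n ih =>
      intro v hv
      by_cases hvR : v ∈ R
      · rw [hf.1 _ hvR, hg.1 _ hvR]
      · have hadj : (graphOf R g).Adj v (f v) := h ▸ adj_parent hf hvR
        obtain ⟨hne, ⟨-, hgv⟩ | ⟨hfvR, hgfv⟩⟩ := graphOf_adj.1 hadj
        · exact hgv.symm
        · have hrv := rank_succ (hf.2 v) hvR
          have h2 := ih (rank R f (f v)) (by omega) (f v) rfl
          rw [hgfv] at h2
          exfalso
          have h3 := rank_succ (hf.2 (f v)) hfvR
          rw [h2] at h3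
          omega
  exact key _ v rfl

lemma graphOf_surj (R : Finset (Fin m)) (G : SimpleGraph (Fin m)) (hA : G.IsAcyclic)
    (hP : ∀ c : G.ConnectedComponent, ∃! r, r ∈ R ∧ G.connectedComponentMk r = c) :
    ∃ f, Valid R f ∧ graphOf R f = G := by
  classical
  set root : Fin m → Fin m := fun v => (hP (G.connectedComponentMk v)).choose with hrootdef
  have hrootR : ∀ v, root v ∈ R := fun v => ((hP _).choose_spec.1).1
  have hrootreach : ∀ v, G.Reachable (root v) v := fun v =>
    SimpleGraph.ConnectedComponent.eq.1 ((hP _).choose_spec.1).2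
  have hrootuniq : ∀ v r', r' ∈ R → G.Reachable r' v → r' = root v := fun v r' h1 h2 =>
    (hP _).choose_spec.2 r' ⟨h1, SimpleGraph.ConnectedComponent.eq.2 h2⟩
  have hrootmem : ∀ v, v ∈ R → root v = v := fun v hv =>
    (hrootuniq v v hv (SimpleGraph.Reachable.refl v)).symm
  have hroot_adj : ∀ v w, G.Adj v w → root v = root w := by
    intro v w hadj
    exact hrootuniq w (root v) (hrootR v) ((hrootreach v).trans hadj.reachable)
  -- the parent step: move one vertex closer to the root
  have hstep' : ∀ (v r0 : Fin m), v ≠ r0 → G.Reachable v r0 →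
      ∃ u, G.Adj v u ∧ G.dist u r0 < G.dist v r0 := by
    intro v r0 hne hre
    obtain ⟨p, hp⟩ := hre.exists_walk_length_eq_dist
    cases p with
    | nil => exact absurd rfl hne
    | cons hadj q =>
      rename_i u
      refine ⟨u, hadj, ?_⟩
      have h1 : G.dist u r0 ≤ q.length := SimpleGraph.dist_le q
      rw [SimpleGraph.Walk.length_cons] at hp
      omega
  have hstep : ∀ v, v ∉ R → ∃ u, G.Adj v u ∧ G.dist u (root v) < G.dist v (root v) := by
    intro v hv
    exact hstep' v (root v) (fun he => hv (he ▸ hrootR v)) (hrootreach v).symm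
  choose pu hpu1 hpu2 using hstep
  set f : Fin m → Fin m := fun v => if hv : v ∈ R then v else pu v hv with hfdef
  have hfR : ∀ z ∈ R, f z = z := fun z hz => dif_pos hz
  have hfnR : ∀ v (hv : v ∉ R), f v = pu v hv := fun v hv => dif_neg hv
  have hfadj : ∀ v (hv : v ∉ R), G.Adj v (f v) := by
    intro v hv; rw [hfnR v hv]; exact hpu1 v hv
  have hvalid : Valid R f := by
    refine ⟨hfR, ?_⟩
    have key : ∀ n v, G.dist v (root v) = n → ∃ j, f^[j] v ∈ R := by
      intro n
      induction n using Nat.strong_induction_on with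
      | _ n ih =>
        intro v hv
        by_cases hvR : v ∈ R
        · exact ⟨0, hvR⟩
        · have hradj := hroot_adj v (f v) (hfadj v hvR)
          have hlt : G.dist (f v) (root (f v)) < n := by
            rw [← hradj, ← hv, hfnR v hvR]
            exact hpu2 v hvR
          obtain ⟨j, hj⟩ := ih _ hlt (f v) rfl
          exact ⟨j + 1, by rwa [iterate_succ_apply]⟩
    intro v
    exact key _ v rfl
  have hle : graphOf R f ≤ G := by
    intro a b hadj
    obtain ⟨hne, ⟨haR, hfa⟩ | ⟨hbR, hfb⟩⟩ := graphOf_adj.1 hadj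
    · exact hfa ▸ hfadj a haR
    · exact (hfb ▸ hfadj b hbR).symm
  -- identify the virtual root with the chosen root
  have hrootf : ∀ v, rootf R f v = root v := by
    intro v
    apply hrootuniq v _ (rootf_mem hvalid)
    exact SimpleGraph.Reachable.mono hle (reach_rootf hvalid v).symm
  refine ⟨f, hvalid, ?_⟩
  ext a b
  constructor
  · exact fun h => hle h
  · intro hadj
    by_cases hPhi : (graphOf R f).Adj a b
    · exact hPhi
    exfalso
    have hreach : (graphOf R f).Reachable b a := by
      have h1 := reach_rootf hvalid a
      have h2 := reach_rootf hvalid b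
      rw [hrootf] at h1 h2
      rw [hroot_adj a b hadj] at h1
      exact h2.trans h1.symm
    obtain ⟨w0⟩ := hreach
    set pth := w0.toPath with hpth
    set hom : graphOf R f →g G := SimpleGraph.Hom.ofLE hle with hhom
    have hinj : Function.Injective hom := fun x y h => by
      simpa [hhom, SimpleGraph.Hom.ofLE_apply] using h
    have hpw : (SimpleGraph.Walk.map hom pth.1).IsPath :=
      SimpleGraph.Walk.map_isPath_of_injective hinj pth.2
    have hnot : s(a, b) ∉ (SimpleGraph.Walk.map hom pth.1).edges := by
      intro hmem
      rw [SimpleGraph.Walk.edges_map] at hmem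
      obtain ⟨e, he, heq⟩ := List.mem_map.1 hmem
      have hid : Sym2.map hom e = e := by
        rcases e with ⟨x, y⟩
        simp [hhom, SimpleGraph.Hom.ofLE_apply]
      rw [hid] at heq
      subst heq
      exact hPhi (pth.1.edges_subset_edgeSet he)
    have hcyc := SimpleGraph.Path.cons_isCycle
      (⟨SimpleGraph.Walk.map hom pth.1, hpw⟩ : G.Path b a) hadj hnot
    exact hA _ hcyc

end GRAPH2

section FINAL
variable {m : ℕ}

theorem partA (R : Finset (Fin m)) :
    Nat.card {G : SimpleGraph (Fin m) // G.IsAcyclic ∧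
      ∀ c : G.ConnectedComponent, ∃! r, r ∈ R ∧ G.connectedComponentMk r = c}
    = Nat.card {f : Fin m → Fin m // Valid R f} := by
  apply Nat.card_congr
  refine (Equiv.ofBijective
    (fun f : {f : Fin m → Fin m // Valid R f} =>
      (⟨graphOf R f.1, graphOf_acyclic f.2, fun c => graphOf_P f.2 c⟩ :
        {G : SimpleGraph (Fin m) // G.IsAcyclic ∧
          ∀ c : G.ConnectedComponent, ∃! r, r ∈ R ∧ G.connectedComponentMk r = c}))
    ⟨?_, ?_⟩).symm
  · intro f g h
    exact Subtype.ext (graphOf_inj f.2 g.2 (congrArg Subtype.val h))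
  · rintro ⟨G, hA, hP⟩
    obtain ⟨f, hval, heq⟩ := graphOf_surj R G hA hP
    exact ⟨⟨f, hval⟩, Subtype.ext heq⟩

end FINAL
end CF

theorem card_forests_with_given_roots (n k : ℕ) (hn : 1 ≤ n)
    (R : Finset (Fin (n + 1))) (hR : R.card = k) (hk : 1 ≤ k) :
    (Nat.card {G : SimpleGraph (Fin (n + 1)) // G.IsAcyclic ∧
        ∀ c : G.ConnectedComponent, ∃! r, r ∈ R ∧ G.connectedComponentMk r = c} : ℚ) =
      (k : ℚ) * ((n : ℚ) + 1) ^ ((n : ℤ) - k) := by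
  have hA := CF.partA R
  have hB := CF.partB R
  rw [hR] at hB
  have hk1 : k ≤ n + 1 := by
    rw [← hR]
    exact le_trans (Finset.card_le_univ R) (by simp)
  have hne : ((n : ℚ) + 1) ≠ 0 := by positivity
  have hq : (Nat.card {f : Fin (n+1) → Fin (n+1) // CF.Valid R f} : ℚ) * ((n : ℚ) + 1)
      = (k : ℚ) * ((n : ℚ) + 1) ^ (n + 1 - k) := by
    have := congrArg (Nat.cast : ℕ → ℚ) hB
    push_cast at this
    convert this using 2
  rw [hA]
  have h1 : (n : ℤ) - k = ((n + 1 - k : ℕ) : ℤ) - 1 := by omega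
  rw [h1, zpow_sub₀ hne, zpow_natCast, zpow_one, ← mul_div_assoc, eq_div_iff hne]
  rw [hq]
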